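/- Let M be a discretely ordered commutative ring that is an integer part of an ordered field K, and suppose there is an element a ∈ M with a > n for all natural numbers n (a is infinite) such that the powers {a^i : i ∈ ℕ} are cofinal in K. Then there is no function g : K → K that is strictly monotone increasing and satisfies g(x) > x^n whenever x ≥ n^2 (for all n : ℕ). In particular K admits no GA-exponential. -/

import Mathlib

theorem stmt_7 {K : Type*} [Field K] [LinearOrder K] [IsStrictOrderedRing K] (M : Subring K)
    (hdisc : ∀ z ∈ M, ∀ z' ∈ M, z < z' → z + 1 ≤ z')
    (hIP : ∀ x : K, ∃ z ∈ M, z ≤ x ∧ x < z + 1)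
    (a : K) (haM : a ∈ M) (hinf : ∀ n : ℕ, (n : K) < a)
    (hcof : ∀ y : K, ∃ i : ℕ, y < a ^ i) :
    ¬∃ g : K → K, StrictMono g ∧ ∀ (x : K) (n : ℕ), (n : K) ^ 2 ≤ x → x ^ n < g x := by
  rintro ⟨g, -, hg⟩
  obtain ⟨i, hi⟩ := hcof (g a)
  have h1 : ((i : K)) ^ 2 ≤ a := by
    have := hinf (i ^ 2)
    push_cast at this
    linarith
  exact absurd (hg a i h1) (not_lt.2 hi.le)
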